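/- Fix integers n ≥ 1 and N ≥ 2. Let μ₀ be a Borel probability measure on ℝ^n absolutely continuous with respect to the Lebesgue measure, and let μ := μ₀^{⊗N} on (ℝ^n)^N. Then for every measurable φ : [0,∞) → ℝ with ‖φ‖²_{L²(ρ)} := (1/(N(N−1))) Σ_{i ≠ j} ∫ φ(‖x_i − x_j‖)² ‖x_i − x_j‖² dμ(X) < ∞, one has ‖f_φ‖²_{L²(μ)} ≥ ((N−1)/N²) ‖φ‖²_{L²(ρ)}, i.e. ‖f_φ‖_{L²(μ)} ≥ (√(N−1)/N) ‖φ‖_{L²(ρ)}. -/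

import Mathlib

open MeasureTheory Finset
open scoped ENNReal NNReal

variable {α : Type*} [MeasurableSpace α] (μ₀ : Measure α) [IsProbabilityMeasure μ₀]

lemma pi_map_comp {m N : ℕ} (hm : 0 < m) (e : Fin m → Fin N) (he : Function.Injective e) :
    (Measure.pi fun _ : Fin N => μ₀).map (fun X => X ∘ e) =
      (Measure.pi fun _ : Fin m => μ₀) := by
  classical
  haveI : Nonempty (Fin m) := ⟨⟨0, hm⟩⟩
  refine (Measure.pi_eq (μ := fun _ : Fin m => μ₀) fun s hs => ?_).symm
  have hmeas : Measurable (fun X : Fin N → α => X ∘ e) :=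
    measurable_pi_iff.mpr fun i => measurable_pi_apply (e i)
  rw [Measure.map_apply hmeas (MeasurableSet.univ_pi hs)]
  set t : Fin N → Set α := fun l =>
    if l ∈ Set.range e then s (Function.invFun e l) else Set.univ with ht
  have hinv : ∀ k, Function.invFun e (e k) = k := Function.leftInverse_invFun he
  have hpre : (fun X : Fin N → α => X ∘ e) ⁻¹' Set.univ.pi s = Set.univ.pi t := by
    ext X
    simp only [Set.mem_preimage, Set.mem_univ_pi, Function.comp_apply, ht]
    constructor
    · intro hX l
      by_cases h : l ∈ Set.range e
      · obtain ⟨k, rfl⟩ := h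
        simpa [hinv] using hX k
      · simp [h]
    · intro hX k
      have := hX (e k)
      simpa [Set.mem_range_self, hinv] using this
  rw [hpre, Measure.pi_pi]
  calc ∏ l, μ₀ (t l) = ∏ l ∈ Finset.univ.image e, μ₀ (t l) := by
        refine (Finset.prod_subset (Finset.subset_univ _) ?_).symm
        intro l _ hl
        have h : l ∉ Set.range e := by
          intro ⟨k, hk⟩; exact hl (Finset.mem_image.mpr ⟨k, Finset.mem_univ _, hk⟩)
        rw [Set.mem_range] at h
        simp [ht, h]
    _ = ∏ k, μ₀ (t (e k)) := Finset.prod_image (fun a _ b _ h => he h)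
    _ = ∏ k, μ₀ (s k) := by
        refine Finset.prod_congr rfl fun k _ => ?_
        simp [ht, hinv k, Set.mem_range_self]

lemma pi_map_pair {N : ℕ} {i j : Fin N} (hij : i ≠ j) :
    (Measure.pi fun _ : Fin N => μ₀).map (fun X => (X i, X j)) = μ₀.prod μ₀ := by
  have he : Function.Injective (![i, j] : Fin 2 → Fin N) := by
    intro a b hab
    fin_cases a <;> fin_cases b <;> simp_all <;> first
      | rfl | exact absurd hab.symm hij | exact absurd hab hij
  have h1 := pi_map_comp μ₀ (by norm_num) _ he
  have h2 := measurePreserving_finTwoArrow (α := α) μ₀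
  have : (fun X : Fin N → α => (X i, X j)) =
      (MeasurableEquiv.finTwoArrow : (Fin 2 → α) ≃ᵐ α × α) ∘ (fun X => X ∘ ![i, j]) := by
    funext X; simp [MeasurableEquiv.finTwoArrow]
  have h3 := Measure.map_map (μ := Measure.pi fun _ : Fin N => μ₀)
    (g := (MeasurableEquiv.finTwoArrow : (Fin 2 → α) ≃ᵐ α × α))
    (f := fun X => X ∘ ![i, j]) (MeasurableEquiv.finTwoArrow).measurable
    (measurable_pi_iff.mpr fun l => measurable_pi_apply _)
  rw [this, ← h3, h1, h2.map_eq]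

lemma pi_map_triple {N : ℕ} {i j k : Fin N} (hij : i ≠ j) (hik : i ≠ k) (hjk : j ≠ k) :
    (Measure.pi fun _ : Fin N => μ₀).map (fun X => (X i, (X j, X k))) =
      μ₀.prod (μ₀.prod μ₀) := by
  have he : Function.Injective (![i, j, k] : Fin 3 → Fin N) := by
    intro a b hab
    fin_cases a <;> fin_cases b <;> simp_all <;> first
      | rfl | exact absurd hab.symm hij | exact absurd hab.symm hik
      | exact absurd hab.symm hjk | exact absurd hab hij | exact absurd hab hik
      | exact absurd hab hjk
  have h1 := pi_map_comp μ₀ (by norm_num) _ he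
  have hT : MeasurePreserving
      (fun Y : Fin 3 → α => (Y 0, (Y 1, Y 2)))
      (Measure.pi fun _ : Fin 3 => μ₀) (μ₀.prod (μ₀.prod μ₀)) := by
    have hA := measurePreserving_piFinSuccAbove (fun _ : Fin 3 => μ₀) 0
    have hB := (MeasurePreserving.id μ₀).prod (measurePreserving_finTwoArrow (α := α) μ₀)
    have := hB.comp hA
    convert this using 1
    funext Y; rfl
  have : (fun X : Fin N → α => (X i, (X j, X k))) =
      (fun Y : Fin 3 → α => (Y 0, (Y 1, Y 2))) ∘ (fun X => X ∘ ![i, j, k]) := by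
    funext X; rfl
  have h3 := Measure.map_map (μ := Measure.pi fun _ : Fin N => μ₀)
    (g := fun Y : Fin 3 → α => (Y 0, (Y 1, Y 2)))
    (f := fun X => X ∘ ![i, j, k]) hT.measurable
    (measurable_pi_iff.mpr fun l => measurable_pi_apply _)
  rw [this, ← h3, h1, hT.map_eq]

lemma lintegral_ofReal_le_add {β : Type*} [MeasurableSpace β] {ν : Measure β} {D C : β → ℝ}
    (hD : Measurable D) (hD0 : ∀ x, 0 ≤ D x) (hC : Integrable C ν)
    (hC0 : 0 ≤ ∫ x, C x ∂ν) :
    ∫⁻ x, ENNReal.ofReal (D x) ∂ν ≤ ∫⁻ x, ENNReal.ofReal (D x + C x) ∂ν := by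
  set a := ∫⁻ x, ENNReal.ofReal (D x + C x) ∂ν
  set b := ∫⁻ x, ENNReal.ofReal (-C x) ∂ν
  set c := ∫⁻ x, ENNReal.ofReal (D x) ∂ν
  set d := ∫⁻ x, ENNReal.ofReal (C x) ∂ν
  have hfin : ∫⁻ x, (‖C x‖₊ : ℝ≥0∞) ∂ν < ⊤ := hC.hasFiniteIntegral
  have hb_fin : b ≠ ⊤ := by
    refine (lt_of_le_of_lt (lintegral_mono fun x => ?_) hfin).ne
    rw [← enorm_eq_nnnorm, Real.enorm_eq_ofReal_abs]
    exact ENNReal.ofReal_le_ofReal (neg_le_abs _)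
  have hd_fin : d ≠ ⊤ := by
    refine (lt_of_le_of_lt (lintegral_mono fun x => ?_) hfin).ne
    rw [← enorm_eq_nnnorm, Real.enorm_eq_ofReal_abs]
    exact ENNReal.ofReal_le_ofReal (le_abs_self _)
  have hbd : b ≤ d := by
    have := MeasureTheory.integral_eq_lintegral_pos_part_sub_lintegral_neg_part hC
    rw [this] at hC0
    have : b.toReal ≤ d.toReal := by linarith [sub_nonneg.mp hC0]
    exact (ENNReal.toReal_le_toReal hb_fin hd_fin).mp this
  have key : c + d ≤ a + b := by
    have hCae : AEMeasurable C ν := hC.aemeasurable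
    calc c + d = ∫⁻ x, (ENNReal.ofReal (D x) + ENNReal.ofReal (C x)) ∂ν := by
          rw [lintegral_add_left' hD.ennreal_ofReal.aemeasurable]
      _ ≤ ∫⁻ x, (ENNReal.ofReal (D x + C x) + ENNReal.ofReal (-C x)) ∂ν := by
          refine lintegral_mono fun x => ?_
          rcases le_or_gt 0 (C x) with h | h
          · rw [ENNReal.ofReal_add (hD0 x) h]
            exact self_le_add_right _ _
          · rw [ENNReal.ofReal_of_nonpos h.le, add_zero]
            rcases le_or_gt 0 (D x + C x) with h2 | h2
            · rw [← ENNReal.ofReal_add h2 (neg_nonneg.mpr h.le)]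
              exact ENNReal.ofReal_le_ofReal (by linarith)
            · calc ENNReal.ofReal (D x) ≤ ENNReal.ofReal (-C x) :=
                    ENNReal.ofReal_le_ofReal (by linarith)
                _ ≤ _ := le_add_self
      _ = a + b := lintegral_add_right' _ hCae.neg.ennreal_ofReal
  have : c + d ≤ a + d := le_trans key (add_le_add_right hbd a)
  exact ENNReal.le_of_add_le_add_right hd_fin this

open scoped RealInnerProductSpace in
lemma cross_nonneg {β H : Type*} [MeasurableSpace β] {ν : Measure β} [IsProbabilityMeasure ν]
    [NormedAddCommGroup H] [InnerProductSpace ℝ H] [MeasurableSpace H] [BorelSpace H]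
    [SecondCountableTopology H] [CompleteSpace H]
    {A : β × β → H} (hA : Measurable A)
    (hfin : ∫⁻ p, (‖A p‖₊ : ℝ≥0∞) ^ 2 ∂(ν.prod ν) ≠ ⊤) :
    Integrable (fun q : β × β × β => ⟪A (q.1, q.2.1), A (q.1, q.2.2)⟫) (ν.prod (ν.prod ν)) ∧
      0 ≤ ∫ q : β × β × β, ⟪A (q.1, q.2.1), A (q.1, q.2.2)⟫ ∂(ν.prod (ν.prod ν)) := by
  have hnn : Measurable fun p : β × β => (‖A p‖₊ : ℝ≥0∞) := hA.enorm
  set G : β → ℝ≥0∞ := fun x => ∫⁻ y, (‖A (x, y)‖₊ : ℝ≥0∞) ∂ν with hG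
  have hGmeas : Measurable G := Measurable.lintegral_prod_right hnn
  have hconj : Real.HolderConjugate 2 2 := Real.HolderConjugate.two_two
  have hCS : ∀ x : β, G x ≤ (∫⁻ y, (‖A (x, y)‖₊ : ℝ≥0∞) ^ 2 ∂ν) ^ (2:ℝ)⁻¹ := by
    intro x
    have h := ENNReal.lintegral_mul_le_Lp_mul_Lq ν hconj
      (f := fun y => (‖A (x, y)‖₊ : ℝ≥0∞)) (g := fun _ => 1)
      (hnn.comp (measurable_prodMk_left)).aemeasurable aemeasurable_const
    simpa [ENNReal.rpow_natCast, one_div] using h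
  have hG2 : ∀ x : β, G x ^ 2 ≤ ∫⁻ y, (‖A (x, y)‖₊ : ℝ≥0∞) ^ 2 ∂ν := by
    intro x
    calc G x ^ 2 ≤ ((∫⁻ y, (‖A (x, y)‖₊ : ℝ≥0∞) ^ 2 ∂ν) ^ (2:ℝ)⁻¹) ^ 2 :=
          pow_le_pow_left₀ (zero_le) (hCS x) 2
      _ = (∫⁻ y, (‖A (x, y)‖₊ : ℝ≥0∞) ^ 2 ∂ν) := by
          rw [← ENNReal.rpow_natCast _ 2, ← ENNReal.rpow_mul]
          norm_num
  have hfin' : ∫⁻ x, (∫⁻ y, (‖A (x, y)‖₊ : ℝ≥0∞) ^ 2 ∂ν) ∂ν ≠ ⊤ := by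
    rwa [← lintegral_prod _ (hnn.pow_const 2).aemeasurable]
  -- finiteness of the dominating integral
  have hdom : ∫⁻ q : β × β × β, (‖A (q.1, q.2.1)‖₊ : ℝ≥0∞) * (‖A (q.1, q.2.2)‖₊ : ℝ≥0∞)
      ∂(ν.prod (ν.prod ν)) < ⊤ := by
    have hm1 : Measurable fun q : β × β × β => (‖A (q.1, q.2.1)‖₊ : ℝ≥0∞) :=
      hnn.comp (measurable_fst.prodMk (measurable_fst.comp measurable_snd))
    have hm2 : Measurable fun q : β × β × β => (‖A (q.1, q.2.2)‖₊ : ℝ≥0∞) :=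
      hnn.comp (measurable_fst.prodMk (measurable_snd.comp measurable_snd))
    rw [lintegral_prod (fun q : β × β × β => (‖A (q.1, q.2.1)‖₊ : ℝ≥0∞) * ‖A (q.1, q.2.2)‖₊) (hm1.mul hm2).aemeasurable]
    have : ∀ x : β, ∫⁻ p : β × β, (‖A (x, p.1)‖₊ : ℝ≥0∞) * (‖A (x, p.2)‖₊ : ℝ≥0∞)
        ∂(ν.prod ν) = G x * G x := by
      intro x
      rw [lintegral_prod_mul (f := fun y => (‖A (x, y)‖₊ : ℝ≥0∞))
        (g := fun y => (‖A (x, y)‖₊ : ℝ≥0∞))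
        (hnn.comp measurable_prodMk_left).aemeasurable
        (hnn.comp measurable_prodMk_left).aemeasurable]
    simp_rw [this]
    refine lt_of_le_of_lt (lintegral_mono fun x => ?_) hfin'.lt_top
    rw [← sq]
    exact hG2 x
  -- integrability of the inner-product function
  have hFmeas : Measurable fun q : β × β × β => ⟪A (q.1, q.2.1), A (q.1, q.2.2)⟫ :=
    Measurable.inner (hA.comp (measurable_fst.prodMk (measurable_fst.comp measurable_snd)))
      (hA.comp (measurable_fst.prodMk (measurable_snd.comp measurable_snd)))
  have hFint : Integrable (fun q : β × β × β => ⟪A (q.1, q.2.1), A (q.1, q.2.2)⟫)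
      (ν.prod (ν.prod ν)) := by
    refine ⟨hFmeas.aestronglyMeasurable, ?_⟩
    refine lt_of_le_of_lt (lintegral_mono fun q => ?_) hdom
    calc (‖⟪A (q.1, q.2.1), A (q.1, q.2.2)⟫‖₊ : ℝ≥0∞)
        ≤ ((‖A (q.1, q.2.1)‖₊ * ‖A (q.1, q.2.2)‖₊ : ℝ≥0) : ℝ≥0∞) := by
          exact_mod_cast nnnorm_inner_le_nnnorm (𝕜 := ℝ) _ _
      _ = _ := by rw [ENNReal.coe_mul]
  refine ⟨hFint, ?_⟩
  -- a.e. integrability of sections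
  have hae1 : ∀ᵐ x ∂ν, ∫⁻ y, (‖A (x, y)‖₊ : ℝ≥0∞) ^ 2 ∂ν < ⊤ :=
    ae_lt_top (Measurable.lintegral_prod_right (hnn.pow_const 2)) hfin'
  have hae2 : ∀ᵐ x ∂ν, Integrable (fun p : β × β => ⟪A (x, p.1), A (x, p.2)⟫) (ν.prod ν) :=
    hFint.prod_right_ae
  rw [integral_prod _ hFint]
  refine integral_nonneg_of_ae ?_
  filter_upwards [hae1, hae2] with x h1 h2
  -- the section x is good: A (x, ·) is integrable
  have hAx : Integrable (fun y => A (x, y)) ν := by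
    refine ⟨(hA.comp measurable_prodMk_left).aestronglyMeasurable, ?_⟩
    refine lt_of_le_of_lt (hCS x) ?_
    exact ENNReal.rpow_lt_top_of_nonneg (by norm_num) h1.ne
  set g : H := ∫ y, A (x, y) ∂ν with hg
  have hz : ∀ y : β, ∫ z, ⟪A (x, y), A (x, z)⟫ ∂ν = ⟪A (x, y), g⟫ := fun y =>
    integral_inner hAx (A (x, y))
  rw [integral_prod _ h2]
  have hz : ∀ y : β, ∫ z, ⟪A (x, y), A (x, z)⟫ ∂ν = ⟪A (x, y), g⟫ := fun y =>
    integral_inner hAx (A (x, y))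
  simp_rw [hz]
  rw [show (fun y => ⟪A (x, y), g⟫) = fun y => ⟪g, A (x, y)⟫ from
    funext fun y => real_inner_comm _ _, integral_inner hAx g]
  exact real_inner_self_nonneg

open scoped NNReal RealInnerProductSpace

/-- The interaction velocity field `f_φ(X)_i = (1/N) ∑_{j ≠ i} φ(‖x_j − x_i‖)(x_j − x_i)`. -/
noncomputable def interactionField (n N : ℕ) (φ : ℝ → ℝ)
    (X : Fin N → EuclideanSpace ℝ (Fin n)) (i : Fin N) : EuclideanSpace ℝ (Fin n) :=
  (N : ℝ)⁻¹ • ∑ j ∈ Finset.univ.erase i, φ ‖X j - X i‖ • (X j - X i)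

/-- coercivity `‖f_φ‖²_{L²(μ)} ≥ ((N−1)/N²) ‖φ‖²_{L²(ρ)}` when `μ = μ₀^{⊗N}`
is the law of `N` i.i.d. particles with `μ₀` absolutely continuous. -/
theorem interactionField_coercivity_iid
    (n N : ℕ) (hn : 1 ≤ n) (hN : 2 ≤ N)
    (μ₀ : Measure (EuclideanSpace ℝ (Fin n))) [IsProbabilityMeasure μ₀]
    (hμ₀ : μ₀ ≪ volume)
    (μ : Measure (Fin N → EuclideanSpace ℝ (Fin n)))
    (hμ : μ = Measure.pi fun _ : Fin N => μ₀)
    (φ : ℝ → ℝ) (hφ : Measurable φ)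
    (hρfin : ((N * (N - 1) : ℕ) : ℝ≥0∞)⁻¹ *
        ∑ i : Fin N, ∑ j ∈ Finset.univ.erase i,
          ∫⁻ X, ENNReal.ofReal ((φ ‖X i - X j‖) ^ 2 * ‖X i - X j‖ ^ 2) ∂μ ≠ ⊤) :
    ∫⁻ X, ENNReal.ofReal ((N : ℝ)⁻¹ * ∑ i : Fin N, ‖interactionField n N φ X i‖ ^ 2) ∂μ ≥
      (((N - 1 : ℕ) : ℝ≥0∞) / ((N : ℝ≥0∞) ^ 2)) *
        (((N * (N - 1) : ℕ) : ℝ≥0∞)⁻¹ *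
          ∑ i : Fin N, ∑ j ∈ Finset.univ.erase i,
            ∫⁻ X, ENNReal.ofReal ((φ ‖X i - X j‖) ^ 2 * ‖X i - X j‖ ^ 2) ∂μ) := by
  classical
  subst hμ
  set E := EuclideanSpace ℝ (Fin n)
  set μpi : Measure (Fin N → E) := Measure.pi fun _ : Fin N => μ₀ with hμpi
  set A : E × E → E := fun p => φ ‖p.2 - p.1‖ • (p.2 - p.1) with hAdef
  have hA : Measurable A := by
    have h1 : Measurable fun p : E × E => p.2 - p.1 := measurable_snd.sub measurable_fst
    exact (hφ.comp h1.norm).smul h1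
  have hKm : Measurable fun p : E × E => (‖A p‖₊ : ℝ≥0∞) ^ 2 := (hA.enorm).pow_const 2
  have hKof : ∀ p : E × E, (‖A p‖₊ : ℝ≥0∞) ^ 2 =
      ENNReal.ofReal ((φ ‖p.1 - p.2‖) ^ 2 * ‖p.1 - p.2‖ ^ 2) := by
    intro p
    rw [← enorm_eq_nnnorm, ← ofReal_norm_eq_enorm, ← ENNReal.ofReal_pow (norm_nonneg _)]
    congr 1
    rw [hAdef]
    simp only [norm_smul, Real.norm_eq_abs]
    rw [norm_sub_rev p.2 p.1, mul_pow, sq_abs]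
  set I := ∫⁻ p : E × E, (‖A p‖₊ : ℝ≥0∞) ^ 2 ∂(μ₀.prod μ₀) with hIdef
  -- each pair term of the ρ-norm equals I
  have hpair' : ∀ i j : Fin N, i ≠ j →
      ∫⁻ X, (‖A (X i, X j)‖₊ : ℝ≥0∞) ^ 2 ∂μpi = I := by
    intro i j hij
    have hmeas_pair : Measurable fun X : Fin N → E => (X i, X j) :=
      (measurable_pi_apply i).prodMk (measurable_pi_apply j)
    rw [hIdef, ← pi_map_pair μ₀ hij, lintegral_map hKm hmeas_pair]
  have hpair : ∀ i j : Fin N, i ≠ j →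
      ∫⁻ X, ENNReal.ofReal ((φ ‖X i - X j‖) ^ 2 * ‖X i - X j‖ ^ 2) ∂μpi = I := by
    intro i j hij
    rw [← hpair' i j hij]
    exact lintegral_congr fun X => (hKof (X i, X j)).symm
  -- the double sum
  have hS : (∑ i : Fin N, ∑ j ∈ Finset.univ.erase i,
      ∫⁻ X, ENNReal.ofReal ((φ ‖X i - X j‖) ^ 2 * ‖X i - X j‖ ^ 2) ∂μpi)
      = ((N * (N - 1) : ℕ) : ℝ≥0∞) * I := by
    have : ∀ i : Fin N, ∑ j ∈ Finset.univ.erase i,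
        ∫⁻ X, ENNReal.ofReal ((φ ‖X i - X j‖) ^ 2 * ‖X i - X j‖ ^ 2) ∂μpi
        = ((N - 1 : ℕ) : ℝ≥0∞) * I := by
      intro i
      rw [Finset.sum_congr rfl fun j hj => hpair i j (Ne.symm (Finset.mem_erase.mp hj).1)]
      rw [Finset.sum_const, Finset.card_erase_of_mem (Finset.mem_univ i), Finset.card_univ,
        Fintype.card_fin, nsmul_eq_mul]
    rw [Finset.sum_congr rfl fun i _ => this i, Finset.sum_const, Finset.card_univ,
      Fintype.card_fin, nsmul_eq_mul, ← mul_assoc]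
    congr 1
    push_cast
    ring
  have hNpos : 0 < N * (N - 1) := Nat.mul_pos (by omega) (by omega)
  have hc0 : ((N * (N - 1) : ℕ) : ℝ≥0∞) ≠ 0 := Nat.cast_ne_zero.mpr hNpos.ne'
  have hctop : ((N * (N - 1) : ℕ) : ℝ≥0∞) ≠ ⊤ := ENNReal.natCast_ne_top _
  have hIfin : I ≠ ⊤ := by
    intro hI
    apply hρfin
    rw [hS, hI, ENNReal.mul_top hc0, ENNReal.mul_top (ENNReal.inv_ne_zero.mpr hctop)]
  -- rewrite the RHS
  rw [hS, ← mul_assoc (((N * (N - 1) : ℕ) : ℝ≥0∞))⁻¹, ENNReal.inv_mul_cancel hc0 hctop,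
    one_mul]
  -- the vector sums
  set g : Fin N → (Fin N → E) → E := fun i X => ∑ j ∈ Finset.univ.erase i, A (X i, X j)
    with hgdef
  have hgmeas : ∀ i, Measurable (g i) := fun i =>
    Finset.measurable_sum _ fun j _ =>
      hA.comp ((measurable_pi_apply i).prodMk (measurable_pi_apply j))
  -- key one-index bound
  have hkey : ∀ i : Fin N,
      ((N - 1 : ℕ) : ℝ≥0∞) * I ≤ ∫⁻ X, ENNReal.ofReal (‖g i X‖ ^ 2) ∂μpi := by
    intro i
    set s : Finset (Fin N) := Finset.univ.erase i with hs
    set D : (Fin N → E) → ℝ := fun X => ∑ j ∈ s, ‖A (X i, X j)‖ ^ 2 with hD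
    set C : (Fin N → E) → ℝ := fun X =>
      ∑ j ∈ s, ∑ k ∈ s.erase j, ⟪A (X i, X j), A (X i, X k)⟫ with hC
    have hDC : ∀ X, ‖g i X‖ ^ 2 = D X + C X := by
      intro X
      have expand : ‖g i X‖ ^ 2 = ∑ j ∈ s, ∑ k ∈ s, ⟪A (X i, X j), A (X i, X k)⟫ := by
        rw [← real_inner_self_eq_norm_sq, hgdef]
        simp only
        rw [sum_inner]
        exact Finset.sum_congr rfl fun j _ => inner_sum _ _ _
      rw [expand, hD, hC]
      simp only
      rw [← Finset.sum_add_distrib]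
      refine Finset.sum_congr rfl fun j hj => ?_
      rw [← Finset.add_sum_erase s _ hj, real_inner_self_eq_norm_sq]
    have hterm_meas : ∀ j k : Fin N,
        Measurable fun X : Fin N → E => ⟪A (X i, X j), A (X i, X k)⟫ := fun j k =>
      Measurable.inner
        (hA.comp ((measurable_pi_apply i).prodMk (measurable_pi_apply j)))
        (hA.comp ((measurable_pi_apply i).prodMk (measurable_pi_apply k)))
    have hcross : ∀ j ∈ s, ∀ k ∈ s.erase j,
        Integrable (fun X => ⟪A (X i, X j), A (X i, X k)⟫) μpi ∧
          0 ≤ ∫ X, ⟪A (X i, X j), A (X i, X k)⟫ ∂μpi := by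
      intro j hj k hk
      have hij : i ≠ j := (Ne.symm (Finset.mem_erase.mp hj).1)
      have hik : i ≠ k :=
        (Ne.symm (Finset.mem_erase.mp (Finset.mem_of_mem_erase hk)).1)
      have hjk : j ≠ k := (Ne.symm (Finset.mem_erase.mp hk).1)
      have hmap := pi_map_triple μ₀ hij hik hjk
      obtain ⟨hint, hpos⟩ := cross_nonneg (ν := μ₀) hA hIfin
      have hT : Measurable fun X : Fin N → E => (X i, (X j, X k)) :=
        (measurable_pi_apply i).prodMk
          ((measurable_pi_apply j).prodMk (measurable_pi_apply k))
      have hFm : AEStronglyMeasurable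
          (fun q : E × E × E => ⟪A (q.1, q.2.1), A (q.1, q.2.2)⟫)
          (μpi.map fun X => (X i, (X j, X k))) := by
        rw [hmap]; exact hint.aestronglyMeasurable
      have hint' : Integrable (fun X => ⟪A (X i, X j), A (X i, X k)⟫) μpi := by
        have := (integrable_map_measure hFm hT.aemeasurable).mp (by rw [hmap]; exact hint)
        exact this
      refine ⟨hint', ?_⟩
      have heq : ∫ X, ⟪A (X i, X j), A (X i, X k)⟫ ∂μpi =
          ∫ q : E × E × E, ⟪A (q.1, q.2.1), A (q.1, q.2.2)⟫ ∂(μ₀.prod (μ₀.prod μ₀)) := by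
        rw [← hmap, integral_map hT.aemeasurable hFm]
      rw [heq]
      exact hpos
    have hCint : Integrable C μpi := by
      refine integrable_finset_sum _ fun j hj => integrable_finset_sum _ fun k hk =>
        (hcross j hj k hk).1
    have hC0 : 0 ≤ ∫ X, C X ∂μpi := by
      rw [hC]
      rw [integral_finset_sum _ fun j hj =>
        integrable_finset_sum _ fun k hk => (hcross j hj k hk).1]
      refine Finset.sum_nonneg fun j hj => ?_
      rw [integral_finset_sum _ fun k hk => (hcross j hj k hk).1]
      exact Finset.sum_nonneg fun k hk => (hcross j hj k hk).2
    have hDmeas : Measurable D :=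
      Finset.measurable_sum _ fun j _ =>
        ((hA.comp ((measurable_pi_apply i).prodMk (measurable_pi_apply j))).norm).pow_const 2
    have hD0 : ∀ X, 0 ≤ D X := fun X => Finset.sum_nonneg fun j _ => sq_nonneg _
    have h1 : ∫⁻ X, ENNReal.ofReal (D X) ∂μpi ≤ ∫⁻ X, ENNReal.ofReal (D X + C X) ∂μpi :=
      lintegral_ofReal_le_add hDmeas hD0 hCint hC0
    have h2 : ∫⁻ X, ENNReal.ofReal (D X) ∂μpi = ((N - 1 : ℕ) : ℝ≥0∞) * I := by
      have hpt : ∀ X, ENNReal.ofReal (D X) =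
          ∑ j ∈ s, (‖A (X i, X j)‖₊ : ℝ≥0∞) ^ 2 := by
        intro X
        rw [hD]
        simp only
        rw [ENNReal.ofReal_sum_of_nonneg fun j _ => sq_nonneg _]
        refine Finset.sum_congr rfl fun j _ => ?_
        rw [← enorm_eq_nnnorm, ← ofReal_norm_eq_enorm, ← ENNReal.ofReal_pow (norm_nonneg _)]
      have hmeas' : ∀ j ∈ s, Measurable fun X : Fin N → E => (‖A (X i, X j)‖₊ : ℝ≥0∞) ^ 2 :=
        fun j _ =>
          (hA.comp ((measurable_pi_apply i).prodMk (measurable_pi_apply j))).enorm.pow_const 2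
      rw [lintegral_congr hpt, lintegral_finset_sum s hmeas']
      rw [Finset.sum_congr rfl fun j hj =>
        hpair' i j (Ne.symm (Finset.mem_erase.mp hj).1)]
      rw [Finset.sum_const, Finset.card_erase_of_mem (Finset.mem_univ i),
        Finset.card_univ, Fintype.card_fin, nsmul_eq_mul]
    calc ((N - 1 : ℕ) : ℝ≥0∞) * I = ∫⁻ X, ENNReal.ofReal (D X) ∂μpi := h2.symm
      _ ≤ ∫⁻ X, ENNReal.ofReal (D X + C X) ∂μpi := h1
      _ = ∫⁻ X, ENNReal.ofReal (‖g i X‖ ^ 2) ∂μpi :=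
          lintegral_congr fun X => by rw [hDC X]
  -- assemble the left-hand side
  have hNposR : (0:ℝ) < (N:ℝ) := by
    have : 0 < N := by omega
    exact_mod_cast this
  have hN0' : (N : ℝ≥0∞) ≠ 0 := Nat.cast_ne_zero.mpr (by omega)
  have hNtop : (N : ℝ≥0∞) ≠ ⊤ := ENNReal.natCast_ne_top N
  set cE : ℝ≥0∞ := (N : ℝ≥0∞)⁻¹ * ((N : ℝ≥0∞) ^ 2)⁻¹ with hcE
  have hfg : ∀ (X : Fin N → E) (i : Fin N),
      interactionField n N φ X i = (N : ℝ)⁻¹ • g i X := fun X i => rfl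
  have hptLHS : ∀ X : Fin N → E,
      ENNReal.ofReal ((N : ℝ)⁻¹ * ∑ i : Fin N, ‖interactionField n N φ X i‖ ^ 2)
      = cE * ∑ i : Fin N, ENNReal.ofReal (‖g i X‖ ^ 2) := by
    intro X
    have h1 : ∀ i : Fin N, ‖interactionField n N φ X i‖ ^ 2
        = ((N : ℝ)⁻¹) ^ 2 * ‖g i X‖ ^ 2 := by
      intro i
      rw [hfg, norm_smul, Real.norm_eq_abs, abs_of_nonneg (by positivity), mul_pow]
    rw [Finset.sum_congr rfl fun i _ => h1 i, ← Finset.mul_sum, ← mul_assoc]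
    rw [ENNReal.ofReal_mul (by positivity), ENNReal.ofReal_sum_of_nonneg fun i _ => sq_nonneg _]
    congr 1
    rw [ENNReal.ofReal_mul (by positivity), hcE]
    congr 1
    · rw [ENNReal.ofReal_inv_of_pos hNposR, ENNReal.ofReal_natCast]
    · rw [ENNReal.ofReal_pow (by positivity), ENNReal.ofReal_inv_of_pos hNposR,
        ENNReal.ofReal_natCast, ENNReal.inv_pow]
  have hgof_meas : ∀ i : Fin N, Measurable fun X : Fin N → E =>
      ENNReal.ofReal (‖g i X‖ ^ 2) :=
    fun i => (((hgmeas i).norm).pow_const 2).ennreal_ofReal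
  have hLHS : ∫⁻ X, ENNReal.ofReal
        ((N : ℝ)⁻¹ * ∑ i : Fin N, ‖interactionField n N φ X i‖ ^ 2) ∂μpi
      = cE * ∑ i : Fin N, ∫⁻ X, ENNReal.ofReal (‖g i X‖ ^ 2) ∂μpi := by
    rw [lintegral_congr hptLHS,
      lintegral_const_mul cE (Finset.measurable_sum _ fun i _ => hgof_meas i),
      lintegral_finset_sum univ fun i _ => hgof_meas i]
  have harith : cE * ((N : ℝ≥0∞) * (((N - 1 : ℕ) : ℝ≥0∞) * I))
      = (((N - 1 : ℕ) : ℝ≥0∞) / (N : ℝ≥0∞) ^ 2) * I := by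
    rw [hcE, div_eq_mul_inv]
    calc (N : ℝ≥0∞)⁻¹ * ((N : ℝ≥0∞) ^ 2)⁻¹ * ((N : ℝ≥0∞) * (((N - 1 : ℕ) : ℝ≥0∞) * I))
        = ((N : ℝ≥0∞)⁻¹ * (N : ℝ≥0∞)) *
            (((N : ℝ≥0∞) ^ 2)⁻¹ * (((N - 1 : ℕ) : ℝ≥0∞) * I)) := by ring
      _ = ((N : ℝ≥0∞) ^ 2)⁻¹ * (((N - 1 : ℕ) : ℝ≥0∞) * I) := by
          rw [ENNReal.inv_mul_cancel hN0' hNtop, one_mul]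
      _ = ((N - 1 : ℕ) : ℝ≥0∞) * ((N : ℝ≥0∞) ^ 2)⁻¹ * I := by ring
  exact
    calc (((N - 1 : ℕ) : ℝ≥0∞) / (N : ℝ≥0∞) ^ 2) * I
        = cE * ((N : ℝ≥0∞) * (((N - 1 : ℕ) : ℝ≥0∞) * I)) := harith.symm
      _ = cE * ∑ _i : Fin N, (((N - 1 : ℕ) : ℝ≥0∞) * I) := by
          rw [Finset.sum_const, Finset.card_univ, Fintype.card_fin, nsmul_eq_mul]
      _ ≤ cE * ∑ i : Fin N, ∫⁻ X, ENNReal.ofReal (‖g i X‖ ^ 2) ∂μpi :=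
          mul_le_mul_right (Finset.sum_le_sum fun i _ => hkey i) cE
      _ = _ := hLHS.symm
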